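/- If G is an nK_2-free graph for some n ≥ 1, then for every s ≥ 1 and every s-fold product e_1⋯e_s of edges of G (not necessarily distinct), the graph G' associated to the polarization of the colon ideal (I(G)^{s+1} : e_1⋯e_s) is also nK_2-free. -/

import Mathlib

/-!
Common definitions: edge ideals, Castelnuovo–Mumford regularity (via graded
free resolutions), chordal/co-chordal graphs, co-chordal cover number,
induced matchings, matchings, vertex covers, even-connections and the
polarized colon graph.
-/

open MvPolynomial

namespace RegPowers

/-- The edge ideal `I(G)` of a finite simple graph `G`, inside `k[x_v : v ∈ V]`:
the ideal generated by the monomials `x_u * x_v` for edges `{u, v}` of `G`. -/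
noncomputable def edgeIdeal (k : Type) [Field k] {V : Type} (G : SimpleGraph V) :
    Ideal (MvPolynomial V k) :=
  Ideal.span {m | ∃ u v : V, G.Adj u v ∧ m = X u * X v}

section Regularity

variable {k : Type} [Field k] {V : Type}

/-- A finite graded free resolution of a homogeneous ideal `I` of the polynomial
ring `k[x_v : v ∈ V]`:  free modules `F i = R^(rank i)` with generators of the
internal degrees `deg i`, an augmentation `F 0 → I` given by homogeneous
generators `gen` of `I`, and graded (degree preserving) differentials
`d i : F (i+1) → F i` given by matrices with homogeneous entries, forming an
exact sequence `0 → F len → ⋯ → F 1 → F 0 → I → 0`. -/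
structure GradedFreeResolution (I : Ideal (MvPolynomial V k)) where
  rank : ℕ → ℕ
  deg : (i : ℕ) → Fin (rank i) → ℕ
  len : ℕ
  rank_eq_zero : ∀ i : ℕ, len < i → rank i = 0
  gen : Fin (rank 0) → MvPolynomial V k
  gen_homog : ∀ l : Fin (rank 0), (gen l).IsHomogeneous (deg 0 l)
  gen_span : Ideal.span (Set.range gen) = I
  d : (i : ℕ) → Matrix (Fin (rank i)) (Fin (rank (i + 1))) (MvPolynomial V k)
  d_homog : ∀ (i : ℕ) (a : Fin (rank i)) (b : Fin (rank (i + 1))),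
    d i a b = 0 ∨ ∃ n : ℕ, (d i a b).IsHomogeneous n ∧ deg (i + 1) b = deg i a + n
  exact_zero :
    LinearMap.ker (Fintype.linearCombination (MvPolynomial V k) gen)
      = LinearMap.range (d 0).mulVecLin
  exact_succ : ∀ i : ℕ,
    LinearMap.ker (d i).mulVecLin = LinearMap.range (d (i + 1)).mulVecLin

/-- The Castelnuovo–Mumford regularity of a homogeneous ideal `I` in a polynomial
ring over a field: the least `r` such that `I` admits a (finite) graded free
resolution whose `i`-th free module is generated in degrees `≤ r + i`.
(The minimal graded free resolution realizes this minimum, so this agrees with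
the usual definition `reg I = max { j - i : Tor_i(I, k)_j ≠ 0 }`.) -/
noncomputable def reg (I : Ideal (MvPolynomial V k)) : ℕ :=
  sInf { r : ℕ | ∃ F : GradedFreeResolution I,
    ∀ (i : ℕ) (l : Fin (F.rank i)), F.deg i l ≤ r + i }

/-- A homogeneous ideal has a linear (minimal free) resolution iff it is generated
in a single degree `d` and its Castelnuovo–Mumford regularity equals `d`. -/
def HasLinearResolution (I : Ideal (MvPolynomial V k)) : Prop :=
  ∃ d : ℕ, (∃ S : Set (MvPolynomial V k),
      (∀ f ∈ S, f.IsHomogeneous d) ∧ Ideal.span S = I) ∧ reg I = d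

/-- A quadratic ideal has a linear presentation (i.e. its minimal free resolution
is 1-step linear): it is generated in degree 2 and admits a graded free resolution
whose zeroth free module is generated in degree `2` and whose first free module is
generated in degrees `≤ 3`. -/
def HasLinearPresentation (I : Ideal (MvPolynomial V k)) : Prop :=
  ∃ F : GradedFreeResolution I,
    (∀ l : Fin (F.rank 0), F.deg 0 l = 2) ∧ (∀ l : Fin (F.rank 1), F.deg 1 l ≤ 3)

end Regularity

section Graphs

variable {V : Type}

/-- A graph is chordal if every induced cycle in it has length 3, i.e. it has no
induced cycle of length `≥ 4`. -/
def IsChordal (G : SimpleGraph V) : Prop :=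
  ∀ n : ℕ, 4 ≤ n → IsEmpty (SimpleGraph.cycleGraph n ↪g G)

/-- The co-chordal cover number `cochord(G)`: the least `n` such that there are
`n` subgraphs `H 1, …, H n` of `G`, each with chordal complement, whose edge sets
cover the edge set of `G`. -/
noncomputable def cochord (G : SimpleGraph V) : ℕ :=
  sInf { n : ℕ | ∃ H : Fin n → SimpleGraph V,
    (∀ i, H i ≤ G ∧ IsChordal (H i)ᶜ) ∧ (⨆ i, H i) = G }

/-- The data `(u i, v i)`, `i < n`, is an induced matching of `G` of size `n`:
the edges `{u i, v i}` are edges of `G`, pairwise vertex disjoint, and the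
subgraph induced on their endpoints contains no other edges. -/
def IsInducedMatching (G : SimpleGraph V) {n : ℕ} (u v : Fin n → V) : Prop :=
  (∀ i, G.Adj (u i) (v i)) ∧
  ∀ i j, i ≠ j →
    (u i ≠ u j ∧ u i ≠ v j ∧ v i ≠ u j ∧ v i ≠ v j) ∧
    (¬ G.Adj (u i) (u j) ∧ ¬ G.Adj (u i) (v j) ∧
      ¬ G.Adj (v i) (u j) ∧ ¬ G.Adj (v i) (v j))

/-- The induced matching number `ν(G)`: the maximum size of an induced matching. -/
noncomputable def inducedMatchingNumber (G : SimpleGraph V) : ℕ :=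
  sSup { n : ℕ | ∃ u v : Fin n → V, IsInducedMatching G u v }

/-- `M` is a maximal matching of `G`: a set of pairwise disjoint edges of `G`
such that every edge of `G` meets an edge of `M`. -/
def IsMaximalMatching (G : SimpleGraph V) (M : Finset (Sym2 V)) : Prop :=
  (↑M ⊆ G.edgeSet) ∧
  ((M : Set (Sym2 V)).Pairwise fun e f => ∀ x : V, x ∈ e → x ∉ f) ∧
  ∀ e ∈ G.edgeSet, ∃ f ∈ M, ∃ x : V, x ∈ e ∧ x ∈ f

/-- The minimum matching number `β(G)`: the least cardinality of a maximal
matching of `G`. -/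
noncomputable def minMatchingNumber (G : SimpleGraph V) : ℕ :=
  sInf { n : ℕ | ∃ M : Finset (Sym2 V), IsMaximalMatching G M ∧ M.card = n }

/-- `(X, Y)` is a bipartition of `G`. -/
def IsBipartition (G : SimpleGraph V) (X Y : Finset V) : Prop :=
  Disjoint X Y ∧ (∀ v : V, v ∈ X ∨ v ∈ Y) ∧
    ∀ u v : V, G.Adj u v → (u ∈ X ∧ v ∈ Y) ∨ (u ∈ Y ∧ v ∈ X)

/-- `G` is bipartite. -/
def IsBipartite (G : SimpleGraph V) : Prop :=
  ∃ X Y : Finset V, IsBipartition G X Y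

/-- `C` is a vertex cover of `G`. -/
def IsVertexCover (G : SimpleGraph V) (C : Finset V) : Prop :=
  ∀ u v : V, G.Adj u v → u ∈ C ∨ v ∈ C

/-- `C` is a minimal vertex cover of `G`. -/
def IsMinimalVertexCover (G : SimpleGraph V) (C : Finset V) : Prop :=
  IsVertexCover G C ∧ ∀ C' ⊆ C, IsVertexCover G C' → C' = C

/-- `G` is unmixed (well-covered): all minimal vertex covers have the same size. -/
def IsUnmixed (G : SimpleGraph V) : Prop :=
  ∀ C C' : Finset V, IsMinimalVertexCover G C → IsMinimalVertexCover G C' →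
    C.card = C'.card

/-- `G` contains no induced path on `m` vertices. -/
def PathFree (m : ℕ) (G : SimpleGraph V) : Prop :=
  IsEmpty (SimpleGraph.pathGraph m ↪g G)

/-- `G` is weakly chordal: every induced cycle in `G` and in `Gᶜ` has length at
most 4. -/
def IsWeaklyChordal (G : SimpleGraph V) : Prop :=
  ∀ n : ℕ, 5 ≤ n →
    IsEmpty (SimpleGraph.cycleGraph n ↪g G) ∧ IsEmpty (SimpleGraph.cycleGraph n ↪g Gᶜ)

/-- `G` is `nK₂`-free: it has no induced matching of size `n`. -/
def NK2Free (n : ℕ) (G : SimpleGraph V) : Prop :=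
  ¬ ∃ u v : Fin n → V, IsInducedMatching G u v

/-- The whiskered graph `W(H)` of `H`: a pendant vertex is attached to every
vertex of `H` (the second copy of the vertex set consists of the pendant
vertices). -/
def whisker (H : SimpleGraph V) : SimpleGraph (V ⊕ V) :=
  SimpleGraph.fromRel fun a b =>
    match a, b with
    | Sum.inl u, Sum.inl v => H.Adj u v
    | Sum.inl u, Sum.inr v => u = v
    | _, _ => False

end Graphs

section EvenConnection

variable {V : Type} [DecidableEq V]

/-- `u` and `v` (possibly equal) are even-connected in `G` with respect to the
`s`-fold product `e 0 ⋯ e (s-1)` of edges of `G`: there is a walk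
`p 0, p 1, …, p (2m+1)` in `G` with `m ≥ 1` from `u` to `v` such that every
even-indexed edge `{p (2l+1), p (2l+2)}` is one of the `e i`, and each `e i` is
used at most as many times as it occurs in the list `e`. -/
def EvenConnected (G : SimpleGraph V) {s : ℕ} (e : Fin s → V × V) (u v : V) : Prop :=
  ∃ (m : ℕ) (p : ℕ → V), 1 ≤ m ∧ p 0 = u ∧ p (2 * m + 1) = v ∧
    (∀ r : ℕ, r < 2 * m + 1 → G.Adj (p r) (p (r + 1))) ∧
    (∀ l : ℕ, l < m → ∃ i : Fin s,
      Sym2.mk (p (2 * l + 1)) (p (2 * l + 2)) = Sym2.mk (e i).1 (e i).2) ∧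
    ∀ i : Fin s,
      ((Finset.range m).filter fun l =>
          Sym2.mk (p (2 * l + 1)) (p (2 * l + 2)) = Sym2.mk (e i).1 (e i).2).card ≤
        (Finset.univ.filter fun j : Fin s => Sym2.mk (e j).1 (e j).2 = Sym2.mk (e i).1 (e i).2).card

/-- The graph `G'` associated to the polarization of the colon ideal
`(I(G)^(s+1) : e 0 ⋯ e (s-1))` (by Banerjee's description of its quadratic
generators): its edges are the edges of `G`, the pairs `{u, v}` of distinct
vertices that are even-connected with respect to `e 0 ⋯ e (s-1)`, and, for every
vertex `u` even-connected to itself, an edge from `u` to the new vertex `u'`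
introduced by polarizing `x_u ^ 2`. -/
def polarGraph (G : SimpleGraph V) {s : ℕ} (e : Fin s → V × V) :
    SimpleGraph (V ⊕ V) :=
  SimpleGraph.fromRel fun a b =>
    match a, b with
    | Sum.inl u, Sum.inl v => G.Adj u v ∨ EvenConnected G e u v
    | Sum.inl u, Sum.inr v => u = v ∧ EvenConnected G e u u
    | _, _ => False

end EvenConnection

end RegPowers

namespace RegPowers

section WalkMachinery
set_option linter.unusedSectionVars false

variable {V : Type} [DecidableEq V] {G : SimpleGraph V} {s : ℕ} {e : Fin s → V × V}

/-- number of odd-position edges of the walk `w` (among the first `L` edges) with class `c`. -/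
def cnt (w : ℕ → V) (L : ℕ) (c : Sym2 V) : ℕ :=
  ((Finset.range L).filter fun r => Odd r ∧ Sym2.mk (w r) (w (r+1)) = c).card

/-- multiplicity of the class of `e i` among the list `e`. -/
def multE (e : Fin s → V × V) (i : Fin s) : ℕ :=
  (Finset.univ.filter fun j : Fin s => Sym2.mk (e j).1 (e j).2 = Sym2.mk (e i).1 (e i).2).card

/-- a legal walk of length `L` (odd): edges in `G`, odd-position edges are classes of
edges from `e`, and each class is used at most its multiplicity in `e`. -/
def LegalWalk (G : SimpleGraph V) (e : Fin s → V × V) (w : ℕ → V) (L : ℕ) : Prop :=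
  Odd L ∧ (∀ r < L, G.Adj (w r) (w (r+1))) ∧
  (∀ r < L, Odd r → ∃ i : Fin s, Sym2.mk (w r) (w (r+1)) = Sym2.mk (e i).1 (e i).2) ∧
  (∀ i : Fin s, cnt w L (Sym2.mk (e i).1 (e i).2) ≤ multE e i)

lemma cnt_congr {w w' : ℕ → V} {L : ℕ} (h : ∀ t ≤ L, w t = w' t) (c : Sym2 V) :
    cnt w L c = cnt w' L c := by
  unfold cnt
  congr 1
  apply Finset.filter_congr
  intro r hr
  rw [Finset.mem_range] at hr
  rw [h r (le_of_lt hr), h (r+1) hr]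

lemma cnt_mono (w : ℕ → V) {L L' : ℕ} (h : L ≤ L') (c : Sym2 V) :
    cnt w L c ≤ cnt w L' c := by
  unfold cnt
  apply Finset.card_le_card
  apply Finset.filter_subset_filter
  exact Finset.range_subset_range.2 h

lemma exists_of_cnt_pos {w : ℕ → V} {L : ℕ} {c : Sym2 V} (h : cnt w L c ≠ 0) :
    ∃ r < L, Odd r ∧ Sym2.mk (w r) (w (r+1)) = c := by
  rw [cnt, ← Nat.pos_iff_ne_zero, Finset.card_pos] at h
  obtain ⟨r, hr⟩ := h
  rw [Finset.mem_filter, Finset.mem_range] at hr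
  exact ⟨r, hr.1, hr.2⟩

lemma cnt_eq_zero {w : ℕ → V} {L : ℕ} {c : Sym2 V}
    (h : ∀ r < L, Odd r → Sym2.mk (w r) (w (r+1)) ≠ c) : cnt w L c = 0 := by
  rw [cnt, Finset.card_eq_zero, Finset.filter_eq_empty_iff]
  intro r hr
  rw [Finset.mem_range] at hr
  intro hc
  exact h r hr hc.1 hc.2

/-- the class of the `r`-th edge of the reversed walk is the class of the
`L - 1 - r`-th edge of the walk. -/
lemma rev_edge (w : ℕ → V) {L r : ℕ} (hr : r < L) :
    Sym2.mk (w (L - r)) (w (L - (r+1))) = Sym2.mk (w (L - 1 - r)) (w (L - 1 - r + 1)) := by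
  have h1 : L - (r+1) = L - 1 - r := by omega
  have h2 : L - r = L - 1 - r + 1 := by omega
  rw [h1, h2]
  exact Sym2.eq_swap

lemma rev_odd {L r : ℕ} (hL : Odd L) (hr : r < L) (h : Odd r) : Odd (L - 1 - r) := by
  rw [Nat.odd_iff] at *
  omega

lemma legal_reverse {w : ℕ → V} {L : ℕ} (h : LegalWalk G e w L) :
    LegalWalk G e (fun t => w (L - t)) L := by
  obtain ⟨hodd, hstep, hcls, hcnt⟩ := h
  refine ⟨hodd, ?_, ?_, ?_⟩
  · intro r hr
    simp only
    have : L - r = L - 1 - r + 1 := by omega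
    rw [this]
    have : L - (r + 1) = L - 1 - r := by omega
    rw [this]
    exact (hstep (L - 1 - r) (by omega)).symm
  · intro r hr hodr
    simp only
    rw [rev_edge w hr]
    exact hcls (L - 1 - r) (by omega) (rev_odd hodd hr hodr)
  · intro i
    refine le_trans (le_of_eq ?_) (hcnt i)
    unfold cnt
    apply Finset.card_bij' (i := fun r _ => L - 1 - r) (j := fun r _ => L - 1 - r)
    · intro r hr
      rw [Finset.mem_filter, Finset.mem_range] at hr ⊢
      obtain ⟨h1, h2, h3⟩ := hr
      refine ⟨by omega, rev_odd hodd h1 h2, ?_⟩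
      rw [← rev_edge w h1]
      exact h3
    · intro r hr
      rw [Finset.mem_filter, Finset.mem_range] at hr ⊢
      obtain ⟨h1, h2, h3⟩ := hr
      refine ⟨by omega, rev_odd hodd h1 h2, ?_⟩
      simp only
      have e1 : L - (L - 1 - r) = r + 1 := by omega
      have e2 : L - (L - 1 - r + 1) = r := by omega
      rw [e1, e2, Sym2.eq_swap]
      exact h3
    · intro r hr
      rw [Finset.mem_filter, Finset.mem_range] at hr
      omega
    · intro r hr
      rw [Finset.mem_filter, Finset.mem_range] at hr
      omega

lemma cnt_double (p : ℕ → V) (m : ℕ) (c : Sym2 V) :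
    ((Finset.range m).filter fun l => Sym2.mk (p (2 * l + 1)) (p (2 * l + 2)) = c).card
      = cnt p (2 * m + 1) c := by
  unfold cnt
  refine Finset.card_bij' (fun l _ => 2 * l + 1) (fun r _ => r / 2) ?hi ?hj ?li ?ri
  case hi =>
    intro l hl
    simp only [Finset.mem_filter, Finset.mem_range] at hl ⊢
    exact ⟨by omega, ⟨l, by omega⟩, hl.2⟩
  case hj =>
    intro r hr
    simp only [Finset.mem_filter, Finset.mem_range] at hr ⊢
    obtain ⟨h1, h2, h3⟩ := hr
    rw [Nat.odd_iff] at h2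
    refine ⟨by omega, ?_⟩
    have e1 : 2 * (r / 2) + 1 = r := by omega
    have e2 : 2 * (r / 2) + 2 = r + 1 := by omega
    rw [e1, e2]
    exact h3
  case li =>
    intro l hl
    show (2 * l + 1) / 2 = l
    omega
  case ri =>
    intro r hr
    simp only [Finset.mem_filter, Finset.mem_range] at hr
    have h2 := hr.2.1
    rw [Nat.odd_iff] at h2
    show 2 * (r / 2) + 1 = r
    omega

/-- from a legal walk, conclude adjacency or even-connection of its ends. -/
lemma conclusion_of_legal {w : ℕ → V} {L : ℕ} (h : LegalWalk G e w L) :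
    G.Adj (w 0) (w L) ∨ EvenConnected G e (w 0) (w L) := by
  obtain ⟨hodd, hstep, hcls, hcnt⟩ := h
  obtain ⟨m, hm⟩ := hodd
  rcases Nat.eq_zero_or_pos m with hm0 | hm1
  · left
    have : L = 1 := by omega
    rw [this]
    exact hstep 0 (by omega)
  · right
    refine ⟨m, w, hm1, rfl, by rw [← hm], ?_, ?_, ?_⟩
    · intro r hr
      exact hstep r (by omega)
    · intro l hl
      exact hcls (2 * l + 1) (by omega) ⟨l, by omega⟩
    · intro i
      rw [cnt_double]
      have : 2 * m + 1 = L := by omega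
      rw [this]
      exact hcnt i

/-- from an even-connection, get a legal walk. -/
lemma legal_of_EC {u v : V} (h : EvenConnected G e u v) :
    ∃ (w : ℕ → V) (L : ℕ), LegalWalk G e w L ∧ w 0 = u ∧ w L = v := by
  obtain ⟨m, p, hm, h0, hL, hstep, hcls, hcnt⟩ := h
  refine ⟨p, 2 * m + 1, ⟨⟨m, by omega⟩, hstep, ?_, ?_⟩, h0, hL⟩
  · intro r hr hodd
    obtain ⟨l, hl⟩ := hodd
    have h2 : 2 * l + 2 = r + 1 := by omega
    have h1 : 2 * l + 1 = r := by omega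
    obtain ⟨i, hi⟩ := hcls l (by omega)
    rw [h1, h2] at hi
    exact ⟨i, hi⟩
  · intro i
    rw [← cnt_double]
    exact hcnt i

/-- single edges of `G` are legal walks. -/
lemma legal_single {a b : V} (h : G.Adj a b) :
    LegalWalk G e (fun t => if t = 0 then a else b) 1 := by
  refine ⟨⟨0, rfl⟩, ?_, ?_, ?_⟩
  · intro r hr
    have : r = 0 := by omega
    subst this
    simpa using h
  · intro r hr hodd
    rw [Nat.odd_iff] at hodd
    omega
  · intro i
    have : cnt (fun t => if t = 0 then a else b) 1 (Sym2.mk (e i).1 (e i).2) = 0 := by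
      apply cnt_eq_zero
      intro r hr hodd
      rw [Nat.odd_iff] at hodd
      omega
    rw [this]
    exact Nat.zero_le _

lemma cnt_split (p : ℕ → V) {σ T : ℕ} (h : σ ≤ T) (c : Sym2 V) :
    cnt p T c = cnt p σ c +
      ((Finset.Ico σ T).filter fun r => Odd r ∧ Sym2.mk (p r) (p (r+1)) = c).card := by
  unfold cnt
  rw [Finset.range_eq_Ico, ← Finset.Ico_union_Ico_eq_Ico (Nat.zero_le σ) h,
    Finset.filter_union, Finset.card_union_of_disjoint]
  · rw [Finset.range_eq_Ico]
  exact Finset.disjoint_filter_filter (p := fun r => Odd r ∧ Sym2.mk (p r) (p (r+1)) = c)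
    (q := fun r => Odd r ∧ Sym2.mk (p r) (p (r+1)) = c) (Finset.Ico_disjoint_Ico_consecutive 0 σ T)

/-- the fundamental gluing lemma: glue the prefix of `wA` up to `σA` with the reversed
prefix of `wB` up to `σB`, joined either by identifying `wA σA = wB σB` (when
`β = σA`) or through the edge `wA σA — wB σB` (when `β = σA + 1`). -/
lemma glue {wA wB : ℕ → V} {LA LB σA σB β : ℕ}
    (hA : LegalWalk G e wA LA) (hB : LegalWalk G e wB LB)
    (hσA : σA ≤ LA) (hσB : σB ≤ LB)
    (hβ : (β = σA ∧ wA σA = wB σB) ∨ (β = σA + 1 ∧ Even σA ∧ G.Adj (wA σA) (wB σB)))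
    (hTodd : Odd (β + σB))
    (husage : ∀ i : Fin s, cnt wA σA (Sym2.mk (e i).1 (e i).2) + cnt wB σB (Sym2.mk (e i).1 (e i).2) ≤ multE e i) :
    G.Adj (wA 0) (wB 0) ∨ EvenConnected G e (wA 0) (wB 0) := by
  obtain ⟨hAo, hAstep, hAcls, hAcnt⟩ := hA
  obtain ⟨hBo, hBstep, hBcls, hBcnt⟩ := hB
  set T := β + σB with hTdef
  have hσAβ : σA ≤ β := by rcases hβ with ⟨h1, _⟩ | ⟨h1, _⟩ <;> omega
  have hβσA1 : β ≤ σA + 1 := by rcases hβ with ⟨h1, _⟩ | ⟨h1, _⟩ <;> omega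
  set p : ℕ → V := fun t => if t ≤ σA then wA t else wB (T - t) with hp
  have hpA : ∀ t ≤ σA, p t = wA t := by
    intro t ht
    simp only [hp, if_pos ht]
  have hpB : ∀ r, β ≤ r → p r = wB (T - r) := by
    intro r hr
    by_cases h : r ≤ σA
    · have h1 : r = σA := by omega
      have h2 : β = σA := by omega
      rcases hβ with ⟨_, hj⟩ | ⟨h3, _⟩
      · rw [h1, hpA σA le_rfl, hj]
        congr 1
        omega
      · omega
    · simp only [hp, if_neg h]
  have hp0 : p 0 = wA 0 := hpA 0 (Nat.zero_le _)
  have hpT : p T = wB 0 := by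
    rw [hpB T (by omega)]
    congr 1
    omega
  -- steps
  have hstep : ∀ r < T, G.Adj (p r) (p (r+1)) := by
    intro r hr
    by_cases h1 : r < σA
    · rw [hpA r (le_of_lt h1), hpA (r+1) h1]
      exact hAstep r (by omega)
    · by_cases h2 : β ≤ r
      · rw [hpB r h2, hpB (r+1) (by omega)]
        have hk : T - (r+1) < σB := by omega
        have hk2 : T - r = (T - (r+1)) + 1 := by omega
        rw [hk2]
        exact (hBstep (T - (r+1)) (by omega)).symm
      · -- σA ≤ r < β : so β = σA + 1 and r = σA
        have h3 : r = σA ∧ β = σA + 1 := by omega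
        rcases hβ with ⟨h4, _⟩ | ⟨h4, _, hadj⟩
        · omega
        · rw [h3.1, hpA σA le_rfl, hpB (σA + 1) (by omega)]
          have : T - (σA + 1) = σB := by omega
          rw [this]
          exact hadj
  -- odd edges are classes from e
  have hcls : ∀ r < T, Odd r → ∃ i : Fin s, Sym2.mk (p r) (p (r+1)) = Sym2.mk (e i).1 (e i).2 := by
    intro r hr hodd
    by_cases h1 : r < σA
    · rw [hpA r (le_of_lt h1), hpA (r+1) h1]
      exact hAcls r (by omega) hodd
    · have h2 : β ≤ r := by
        rcases hβ with ⟨h4, _⟩ | ⟨h4, heven, _⟩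
        · omega
        · rcases Nat.lt_or_ge r β with h5 | h5
          · exfalso
            have : r = σA := by omega
            rw [Nat.odd_iff] at hodd
            rw [Nat.even_iff] at heven
            omega
          · exact h5
      rw [hpB r h2, hpB (r+1) (by omega)]
      have hk : T - (r+1) < σB := by omega
      have hkodd : Odd (T - (r + 1)) := by
        rw [Nat.odd_iff] at hodd hTodd ⊢
        omega
      obtain ⟨i, hi⟩ := hBcls (T - (r+1)) (by omega) hkodd
      refine ⟨i, ?_⟩
      have hk2 : T - r = (T - (r+1)) + 1 := by omega
      rw [hk2, Sym2.eq_swap]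
      exact hi
  -- counting
  have hcnt : ∀ c : Sym2 V, cnt p T c = cnt wA σA c + cnt wB σB c := by
    intro c
    rw [cnt_split p (by omega : σA ≤ T) c]
    congr 1
    · exact (cnt_congr (fun t ht => hpA t ht) c)
    · -- bijection r ↦ T - 1 - r between the Ico part and the odd edges of wB before σB
      unfold cnt
      refine Finset.card_bij' (fun r _ => T - 1 - r) (fun b _ => T - 1 - b) ?hi ?hj ?li ?ri
      case hi =>
        intro r hrm
        simp only [Finset.mem_filter, Finset.mem_Ico, Finset.mem_range] at hrm ⊢
        obtain ⟨⟨hr1, hr2⟩, hodd, hclass⟩ := hrm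
        have hrβ : β ≤ r := by
          rcases hβ with ⟨h4, _⟩ | ⟨h4, heven, _⟩
          · omega
          · rw [Nat.odd_iff] at hodd
            rw [Nat.even_iff] at heven
            omega
        have h1 : T - 1 - r < σB := by omega
        have h2 : Odd (T - 1 - r) := by
          rw [Nat.odd_iff] at hodd hTodd ⊢
          omega
        refine ⟨h1, h2, ?_⟩
        rw [hpB r hrβ, hpB (r+1) (by omega)] at hclass
        have e1 : T - (r+1) = T - 1 - r := by omega
        have e2 : T - r = (T - 1 - r) + 1 := by omega
        rw [e1, e2, Sym2.eq_swap] at hclass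
        exact hclass
      case hj =>
        intro b hbm
        simp only [Finset.mem_filter, Finset.mem_Ico, Finset.mem_range] at hbm ⊢
        obtain ⟨hb1, hbodd, hbclass⟩ := hbm
        have hr1 : β ≤ T - 1 - b := by omega
        have hr2 : T - 1 - b < T := by omega
        have hrodd : Odd (T - 1 - b) := by
          rw [Nat.odd_iff] at hbodd hTodd ⊢
          omega
        refine ⟨⟨by omega, hr2⟩, hrodd, ?_⟩
        rw [hpB _ hr1, hpB _ (by omega : β ≤ (T - 1 - b) + 1)]
        have e1 : T - (T - 1 - b) = b + 1 := by omega
        have e2 : T - ((T - 1 - b) + 1) = b := by omega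
        rw [e1, e2, Sym2.eq_swap]
        exact hbclass
      case li =>
        intro r hrm
        simp only [Finset.mem_filter, Finset.mem_Ico] at hrm
        show T - 1 - (T - 1 - r) = r
        omega
      case ri =>
        intro b hbm
        simp only [Finset.mem_filter, Finset.mem_range] at hbm
        show T - 1 - (T - 1 - b) = b
        omega
  have hlegal : LegalWalk G e p T := by
    refine ⟨hTodd, hstep, hcls, ?_⟩
    intro i
    rw [hcnt]
    exact husage i
  have := conclusion_of_legal hlegal
  rw [hp0, hpT] at this
  exact this

lemma crossed_of_reverse {w : ℕ → V} {L : ℕ} (hL : Odd L) {c : Sym2 V} {r : ℕ}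
    (hr : r < L) (hodd : Odd r)
    (hc : Sym2.mk ((fun t => w (L - t)) r) ((fun t => w (L - t)) (r+1)) = c) :
    ∃ r' , r' < L ∧ Odd r' ∧ Sym2.mk (w r') (w (r'+1)) = c := by
  refine ⟨L - 1 - r, by omega, rev_odd hL hr hodd, ?_⟩
  rw [← rev_edge w hr]
  exact hc

lemma cnt_ne_zero_of {w : ℕ → V} {L : ℕ} {c : Sym2 V} {r : ℕ}
    (hr : r < L) (ho : Odd r) (hc : Sym2.mk (w r) (w (r+1)) = c) : cnt w L c ≠ 0 := by
  rw [cnt, ← Nat.pos_iff_ne_zero, Finset.card_pos]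
  exact ⟨r, Finset.mem_filter.2 ⟨Finset.mem_range.2 hr, ho, hc⟩⟩

lemma cnt_reverse_eq_zero {w : ℕ → V} {L : ℕ} (hL : Odd L) {c : Sym2 V}
    (h : cnt w L c = 0) : cnt (fun t => w (L - t)) L c = 0 := by
  apply cnt_eq_zero
  intro r hr hodd hceq
  obtain ⟨r', hr', hodd', hc'⟩ := crossed_of_reverse hL hr hodd hceq
  exact cnt_ne_zero_of hr' hodd' hc' h

lemma usage_of_separated {wA wB : ℕ → V} {LA LB σA σB : ℕ}
    (hA : LegalWalk G e wA LA) (hB : LegalWalk G e wB LB) (hσA : σA ≤ LA) (hσB : σB ≤ LB)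
    (hsep : ∀ i : Fin s, cnt wA LA (Sym2.mk (e i).1 (e i).2) = 0 ∨ cnt wB LB (Sym2.mk (e i).1 (e i).2) = 0) :
    ∀ i : Fin s, cnt wA σA (Sym2.mk (e i).1 (e i).2) + cnt wB σB (Sym2.mk (e i).1 (e i).2) ≤ multE e i := by
  intro i
  rcases hsep i with h | h
  · have h2 : cnt wA σA (Sym2.mk (e i).1 (e i).2) = 0 :=
      Nat.eq_zero_of_le_zero (h ▸ cnt_mono wA hσA _)
    rw [h2, Nat.zero_add]
    exact le_trans (cnt_mono wB hσB _) (hB.2.2.2 i)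
  · have h2 : cnt wB σB (Sym2.mk (e i).1 (e i).2) = 0 :=
      Nat.eq_zero_of_le_zero (h ▸ cnt_mono wB hσB _)
    rw [h2, Nat.add_zero]
    exact le_trans (cnt_mono wA hσA _) (hA.2.2.2 i)

/-- The master lemma: if two legal walks admit a junction (a common vertex, or a
`G`-edge between a vertex of one and a vertex of the other), then some pair of
endpoints of the two walks coincide, are adjacent, or are even-connected. -/
theorem master {wA wB : ℕ → V} {LA LB : ℕ}
    (hA : LegalWalk G e wA LA) (hB : LegalWalk G e wB LB)
    (hj : (∃ rA rB, rA ≤ LA ∧ rB ≤ LB ∧ wA rA = wB rB) ∨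
          (∃ rA rB, rA ≤ LA ∧ rB ≤ LB ∧ G.Adj (wA rA) (wB rB))) :
    ∃ a b, (a = wA 0 ∨ a = wA LA) ∧ (b = wB 0 ∨ b = wB LB) ∧
      (a = b ∨ G.Adj a b ∨ EvenConnected G e a b) := by
  classical
  have hAo := hA.1
  have hBo := hB.1
  have hA' : LegalWalk G e (fun t => wA (LA - t)) LA := legal_reverse hA
  have hB' : LegalWalk G e (fun t => wB (LB - t)) LB := legal_reverse hB
  have hA'0 : (fun t => wA (LA - t)) 0 = wA LA := by simp
  have hB'0 : (fun t => wB (LB - t)) 0 = wB LB := by simp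
  have hA'v : ∀ τ ≤ LA, (fun t => wA (LA - t)) (LA - τ) = wA τ := by
    intro τ hτ
    simp only
    congr 1
    omega
  have hB'v : ∀ τ ≤ LB, (fun t => wB (LB - t)) (LB - τ) = wB τ := by
    intro τ hτ
    simp only
    congr 1
    omega
  by_cases hsh : ∃ rA, rA < LA ∧ Odd rA ∧ ∃ rB, rB < LB ∧ Odd rB ∧
      Sym2.mk (wB rB) (wB (rB+1)) = Sym2.mk (wA rA) (wA (rA+1))
  · -- there is a shared class; junction at its earliest occurrence on `wA`
    set ρ := Nat.find hsh with hρdef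
    obtain ⟨hρLA, hρodd, rB, hrBLB, hrBodd, hclassBA⟩ := Nat.find_spec hsh
    have husage : ∀ (w2 : ℕ → V) (L2 σ2 : ℕ), LegalWalk G e w2 L2 → σ2 ≤ L2 →
        (∀ i : Fin s, cnt wA LA (Sym2.mk (e i).1 (e i).2) ≠ 0 →
          cnt wA ρ (Sym2.mk (e i).1 (e i).2) ≠ 0 → cnt w2 σ2 (Sym2.mk (e i).1 (e i).2) = 0) →
        ∀ i : Fin s, cnt wA ρ (Sym2.mk (e i).1 (e i).2) + cnt w2 σ2 (Sym2.mk (e i).1 (e i).2) ≤ multE e i := by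
      intro w2 L2 σ2 h2 hσ2 hvan i
      by_cases h0 : cnt wA ρ (Sym2.mk (e i).1 (e i).2) = 0
      · rw [h0, Nat.zero_add]
        exact le_trans (cnt_mono w2 hσ2 _) (h2.2.2.2 i)
      · have h1 : cnt wA LA (Sym2.mk (e i).1 (e i).2) ≠ 0 := by
          intro hc
          exact h0 (Nat.eq_zero_of_le_zero (hc ▸ cnt_mono wA (le_of_lt hρLA) _))
        rw [hvan i h1 h0, Nat.add_zero]
        exact le_trans (cnt_mono wA (le_of_lt hρLA) _) (hA.2.2.2 i)
    -- a class occurring before ρ on wA does not occur on wB at all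
    have hmin : ∀ i : Fin s, cnt wA ρ (Sym2.mk (e i).1 (e i).2) ≠ 0 →
        ∀ r, r < LB → Odd r → Sym2.mk (wB r) (wB (r+1)) ≠ Sym2.mk (e i).1 (e i).2 := by
      intro i hne r hr hrodd hceq
      obtain ⟨r', hr', hodd', hclass'⟩ := exists_of_cnt_pos hne
      refine Nat.find_min hsh (m := r') hr' ⟨by omega, hodd', r, hr, hrodd, ?_⟩
      rw [hceq, hclass']
    rw [Sym2.eq_iff] at hclassBA
    -- the class of the crossing at ρ
    obtain ⟨i0, hi0⟩ := hA.2.2.1 ρ hρLA hρodd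
    rcases hclassBA with ⟨hc1, hc2⟩ | ⟨hc1, hc2⟩
    · -- wB rB = wA ρ : junction with the reversed walk wB'
      have hglue := glue (σA := ρ) (σB := LB - rB) (β := ρ) hA hB'
        (le_of_lt hρLA) (by omega)
        (Or.inl ⟨rfl, by
          show wA ρ = wB (LB - (LB - rB))
          rw [Nat.sub_sub_self (le_of_lt hrBLB)]
          exact hc1.symm⟩)
        (by
          have h1 : Even (LB - rB) := Nat.Odd.sub_odd hBo hrBodd
          exact hρodd.add_even h1)
        (husage _ LB (LB - rB) hB' (by omega) ?_)
      · refine ⟨wA 0, wB LB, Or.inl rfl, Or.inr rfl, ?_⟩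
        rw [Nat.sub_zero] at hglue
        exact Or.inr hglue
      · intro i _ hne
        apply cnt_eq_zero
        intro r hr hrodd2 hceq
        obtain ⟨r', hr', hodd', hc'⟩ := crossed_of_reverse hBo (by omega : r < LB) hrodd2 hceq
        exact hmin i hne r' hr' hodd' hc'
    · -- wB rB = wA (ρ+1), so wB (rB+1) = wA ρ : junction with wB itself
      have hglue := glue (σA := ρ) (σB := rB + 1) (β := ρ) hA hB
        (le_of_lt hρLA) (by omega)
        (Or.inl ⟨rfl, hc2.symm⟩)
        (by
          have h1 : Even (rB + 1) := hrBodd.add_one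
          exact hρodd.add_even h1)
        (husage _ LB (rB + 1) hB (by omega) ?_)
      · exact ⟨wA 0, wB 0, Or.inl rfl, Or.inl rfl, Or.inr hglue⟩
      · intro i _ hne
        apply cnt_eq_zero
        intro r hr hrodd2 hceq
        exact hmin i hne r (by omega) hrodd2 hceq
  · -- no shared class: any arms are jointly within budget
    push_neg at hsh
    have hdic : ∀ i : Fin s, cnt wA LA (Sym2.mk (e i).1 (e i).2) = 0 ∨ cnt wB LB (Sym2.mk (e i).1 (e i).2) = 0 := by
      intro i
      by_contra hcon
      push_neg at hcon
      obtain ⟨rA, hrA, hoA, hcA⟩ := exists_of_cnt_pos hcon.1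
      obtain ⟨rB2, hrB2, hoB2, hcB2⟩ := exists_of_cnt_pos hcon.2
      exact hsh rA hrA hoA rB2 hrB2 hoB2 (by rw [hcA, hcB2])
    have hdicA' : ∀ i : Fin s, cnt (fun t => wA (LA - t)) LA (Sym2.mk (e i).1 (e i).2) = 0 ∨
        cnt wB LB (Sym2.mk (e i).1 (e i).2) = 0 :=
      fun i => (hdic i).imp (cnt_reverse_eq_zero hAo) id
    have hdicB' : ∀ i : Fin s, cnt wA LA (Sym2.mk (e i).1 (e i).2) = 0 ∨
        cnt (fun t => wB (LB - t)) LB (Sym2.mk (e i).1 (e i).2) = 0 :=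
      fun i => (hdic i).imp id (cnt_reverse_eq_zero hBo)
    have hdicA'B' : ∀ i : Fin s, cnt (fun t => wA (LA - t)) LA (Sym2.mk (e i).1 (e i).2) = 0 ∨
        cnt (fun t => wB (LB - t)) LB (Sym2.mk (e i).1 (e i).2) = 0 :=
      fun i => (hdic i).imp (cnt_reverse_eq_zero hAo) (cnt_reverse_eq_zero hBo)
    rcases hj with ⟨rA, rB, hrA, hrB, hjeq⟩ | ⟨rA, rB, hrA, hrB, hjadj⟩
    · -- junction by a common vertex
      by_cases hpar : Odd (rA + rB)
      · have hglue := glue (σA := rA) (σB := rB) (β := rA) hA hB hrA hrB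
          (Or.inl ⟨rfl, hjeq⟩) hpar
          (usage_of_separated hA hB hrA hrB hdic)
        exact ⟨wA 0, wB 0, Or.inl rfl, Or.inl rfl, Or.inr hglue⟩
      · have hpar2 : Odd (rA + (LB - rB)) := by
          rw [Nat.odd_iff] at hBo ⊢
          rw [Nat.odd_iff] at hpar
          omega
        have hglue := glue (σA := rA) (σB := LB - rB) (β := rA) hA hB' hrA (by omega)
          (Or.inl ⟨rfl, by
            show wA rA = wB (LB - (LB - rB))
            rw [Nat.sub_sub_self hrB]
            exact hjeq⟩) hpar2
          (usage_of_separated hA hB' hrA (by omega) hdicB')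
        refine ⟨wA 0, wB LB, Or.inl rfl, Or.inr rfl, ?_⟩
        rw [Nat.sub_zero] at hglue
        exact Or.inr hglue
    · -- junction by an edge of G
      by_cases hevA : Even rA
      · by_cases hevB : Even rB
        · have hglue := glue (σA := rA) (σB := rB) (β := rA + 1) hA hB hrA hrB
            (Or.inr ⟨rfl, hevA, hjadj⟩)
            (by
              rw [Nat.odd_iff]
              rw [Nat.even_iff] at hevA hevB
              omega)
            (usage_of_separated hA hB hrA hrB hdic)
          exact ⟨wA 0, wB 0, Or.inl rfl, Or.inl rfl, Or.inr hglue⟩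
        · have hevB2 : Even (LB - rB) := Nat.Odd.sub_odd hBo (Nat.not_even_iff_odd.1 hevB)
          have hglue := glue (σA := rA) (σB := LB - rB) (β := rA + 1) hA hB' hrA (by omega)
            (Or.inr ⟨rfl, hevA, by
              show G.Adj (wA rA) (wB (LB - (LB - rB)))
              rw [Nat.sub_sub_self hrB]
              exact hjadj⟩)
            (by
              rw [Nat.odd_iff]
              rw [Nat.even_iff] at hevA hevB2
              omega)
            (usage_of_separated hA hB' hrA (by omega) hdicB')
          refine ⟨wA 0, wB LB, Or.inl rfl, Or.inr rfl, ?_⟩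
          rw [Nat.sub_zero] at hglue
          exact Or.inr hglue
      · have hevA2 : Even (LA - rA) := Nat.Odd.sub_odd hAo (Nat.not_even_iff_odd.1 hevA)
        by_cases hevB : Even rB
        · have hglue := glue (σA := LA - rA) (σB := rB) (β := (LA - rA) + 1) hA' hB
            (by omega) hrB
            (Or.inr ⟨rfl, hevA2, by
              show G.Adj (wA (LA - (LA - rA))) (wB rB)
              rw [Nat.sub_sub_self hrA]
              exact hjadj⟩)
            (by
              rw [Nat.odd_iff]
              rw [Nat.even_iff] at hevA2 hevB
              omega)
            (usage_of_separated hA' hB (by omega) hrB hdicA')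
          refine ⟨wA LA, wB 0, Or.inr rfl, Or.inl rfl, ?_⟩
          rw [Nat.sub_zero] at hglue
          exact Or.inr hglue
        · have hevB2 : Even (LB - rB) := Nat.Odd.sub_odd hBo (Nat.not_even_iff_odd.1 hevB)
          have hglue := glue (σA := LA - rA) (σB := LB - rB) (β := (LA - rA) + 1) hA' hB'
            (by omega) (by omega)
            (Or.inr ⟨rfl, hevA2, by
              show G.Adj (wA (LA - (LA - rA))) (wB (LB - (LB - rB)))
              rw [Nat.sub_sub_self hrA, Nat.sub_sub_self hrB]
              exact hjadj⟩)
            (by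
              rw [Nat.odd_iff]
              rw [Nat.even_iff] at hevA2 hevB2
              omega)
            (usage_of_separated hA' hB' (by omega) (by omega) hdicA'B')
          refine ⟨wA LA, wB LB, Or.inr rfl, Or.inr rfl, ?_⟩
          rw [Nat.sub_zero] at hglue
          exact Or.inr hglue

end WalkMachinery

/-- If `G` is an `nK₂`-free graph for some `n ≥ 1`, then for
every `s ≥ 1` and every `s`-fold product `e 0 ⋯ e (s-1)` of edges of `G` (not
necessarily distinct), the graph `G'` associated to the polarization of the colon
ideal `(I(G)^(s+1) : e 0 ⋯ e (s-1))` (described, via Banerjee's theorem, by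
even-connections) is also `nK₂`-free. -/
theorem nK2Free_polarGraph {V : Type} [Fintype V] [DecidableEq V]
    (G : SimpleGraph V) (n : ℕ) (hn : 1 ≤ n) (hfree : NK2Free n G)
    (s : ℕ) (hs : 1 ≤ s) (e : Fin s → V × V) (he : ∀ i, G.Adj (e i).1 (e i).2)
    (G' : SimpleGraph (V ⊕ V)) (hG' : G' = polarGraph G e) :
    NK2Free n G' := by
  subst hG'
  rintro ⟨u, v, hIM⟩
  -- extract a legal walk for each edge of the matching
  have hwalks : ∀ i : Fin n, ∃ (w : ℕ → V) (L : ℕ), LegalWalk G e w L ∧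
      (Sum.inl (w 0) = u i ∨ Sum.inl (w 0) = v i) ∧
      (Sum.inl (w L) = u i ∨ Sum.inl (w L) = v i) := by
    intro i
    have hadj := hIM.1 i
    rcases hui : u i with p | p <;> rcases hvi : v i with q | q <;>
        rw [hui, hvi, polarGraph, SimpleGraph.fromRel_adj] at hadj <;>
        obtain ⟨hne, hrel⟩ := hadj
    · have hrel' : (G.Adj p q ∨ EvenConnected G e p q) ∨
          (G.Adj q p ∨ EvenConnected G e q p) := hrel
      rcases hrel' with (h | h) | (h | h)
      · refine ⟨fun t => if t = 0 then p else q, 1, legal_single h, ?_, ?_⟩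
        · left; rfl
        · right; rfl
      · obtain ⟨w, L, hleg, h0, hL⟩ := legal_of_EC h
        exact ⟨w, L, hleg, Or.inl (by rw [h0]), Or.inr (by rw [hL])⟩
      · refine ⟨fun t => if t = 0 then q else p, 1, legal_single h, ?_, ?_⟩
        · right; rfl
        · left; rfl
      · obtain ⟨w, L, hleg, h0, hL⟩ := legal_of_EC h
        exact ⟨w, L, hleg, Or.inr (by rw [h0]), Or.inl (by rw [hL])⟩
    · have hrel' : (p = q ∧ EvenConnected G e p p) ∨ False := hrel
      rcases hrel' with ⟨hpq, h⟩ | h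
      · obtain ⟨w, L, hleg, h0, hL⟩ := legal_of_EC h
        exact ⟨w, L, hleg, Or.inl (by rw [h0]), Or.inl (by rw [hL])⟩
      · exact absurd h id
    · have hrel' : False ∨ (q = p ∧ EvenConnected G e q q) := hrel
      rcases hrel' with h | ⟨hqp, h⟩
      · exact absurd h id
      · obtain ⟨w, L, hleg, h0, hL⟩ := legal_of_EC h
        exact ⟨w, L, hleg, Or.inr (by rw [h0]), Or.inr (by rw [hL])⟩
    · have hrel' : False ∨ False := hrel
      exact absurd hrel' (by simp)
  choose w L hleg hend0 hend1 using hwalks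
  have hL1 : ∀ i, 1 ≤ L i := by
    intro i
    obtain ⟨m, hm⟩ := (hleg i).1
    omega
  apply hfree
  refine ⟨fun i => w i 0, fun i => w i 1, ?_, ?_⟩
  · intro i
    exact (hleg i).2.1 0 (hL1 i)
  · intro i j hij
    have key : ∀ rA rB : ℕ, rA ≤ L i → rB ≤ L j →
        (w i rA = w j rB ∨ G.Adj (w i rA) (w j rB)) → False := by
      intro rA rB hrA hrB hcross
      have hj' : (∃ a b, a ≤ L i ∧ b ≤ L j ∧ w i a = w j b) ∨
          (∃ a b, a ≤ L i ∧ b ≤ L j ∧ G.Adj (w i a) (w j b)) := by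
        rcases hcross with h | h
        · exact Or.inl ⟨rA, rB, hrA, hrB, h⟩
        · exact Or.inr ⟨rA, rB, hrA, hrB, h⟩
      obtain ⟨a, b, ha, hb, hrel⟩ := master (hleg i) (hleg j) hj'
      have hina : Sum.inl a = u i ∨ Sum.inl a = v i := by
        rcases ha with h | h
        · rw [h]; exact hend0 i
        · rw [h]; exact hend1 i
      have hinb : Sum.inl b = u j ∨ Sum.inl b = v j := by
        rcases hb with h | h
        · rw [h]; exact hend0 j
        · rw [h]; exact hend1 j
      obtain ⟨⟨d1, d2, d3, d4⟩, n1, n2, n3, n4⟩ := hIM.2 i j hij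
      by_cases hab : a = b
      · subst hab
        rcases hina with h | h <;> rcases hinb with h' | h'
        · exact d1 (h.symm.trans h')
        · exact d2 (h.symm.trans h')
        · exact d3 (h.symm.trans h')
        · exact d4 (h.symm.trans h')
      · have hadj : (polarGraph G e).Adj (Sum.inl a) (Sum.inl b) := by
          rw [polarGraph, SimpleGraph.fromRel_adj]
          refine ⟨by simpa using hab, Or.inl ?_⟩
          show G.Adj a b ∨ EvenConnected G e a b
          rcases hrel with h | h | h
          · exact absurd h hab
          · exact Or.inl h
          · exact Or.inr h
        rcases hina with h | h <;> rcases hinb with h' | h' <;> rw [h, h'] at hadj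
        · exact n1 hadj
        · exact n2 hadj
        · exact n3 hadj
        · exact n4 hadj
    refine ⟨⟨?_, ?_, ?_, ?_⟩, ?_, ?_, ?_, ?_⟩
    · exact fun h => key 0 0 (Nat.zero_le _) (Nat.zero_le _) (Or.inl h)
    · exact fun h => key 0 1 (Nat.zero_le _) (hL1 j) (Or.inl h)
    · exact fun h => key 1 0 (hL1 i) (Nat.zero_le _) (Or.inl h)
    · exact fun h => key 1 1 (hL1 i) (hL1 j) (Or.inl h)
    · exact fun h => key 0 0 (Nat.zero_le _) (Nat.zero_le _) (Or.inr h)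
    · exact fun h => key 0 1 (Nat.zero_le _) (hL1 j) (Or.inr h)
    · exact fun h => key 1 0 (hL1 i) (Nat.zero_le _) (Or.inr h)
    · exact fun h => key 1 1 (hL1 i) (hL1 j) (Or.inr h)

end RegPowers
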